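/- Let φ(α₁,…,α_r) be a quantifier-free first-order formula over (ℂ,0,1,+,−,×,=) in which all polynomials have degree less than D and integer coefficients of absolute value strictly less than C. If φ(ᾱ) holds for every tuple ᾱ ∈ ℂ^r of numbers algebraically independent over ℚ, then φ(β₁,…,β_r) holds for any integer sequence with β₁ ≥ C and β_{j+1} ≥ C·D^j·β_j^D for 1 ≤ j ≤ r−1. -/

import Mathlib

open MvPolynomial Finset

namespace Koiran5

def dig (D n i : ℕ) : ℕ := n / D ^ i % D

def T (b : ℕ → ℤ) (D r n : ℕ) : ℤ := ∏ i ∈ Finset.range r, b i ^ dig D n i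

lemma one_le_T {b : ℕ → ℤ} (hb : ∀ i, 1 ≤ b i) (D r n : ℕ) : 1 ≤ T b D r n := by
  unfold T
  calc (1:ℤ) = ∏ _i ∈ Finset.range r, 1 := by simp
    _ ≤ ∏ i ∈ Finset.range r, b i ^ dig D n i :=
      Finset.prod_le_prod (by intros; norm_num) (fun i _ => one_le_pow₀ (hb i))

lemma pred_div (k a : ℕ) (hk : 0 < k) (ha : 0 < a) : (k * a - 1) / k = a - 1 := by
  obtain ⟨a', rfl⟩ : ∃ a', a = a' + 1 := ⟨a - 1, by omega⟩
  have h : k * (a' + 1) - 1 = k * a' + (k - 1) := by rw [Nat.mul_succ]; omega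
  rw [h, Nat.mul_add_div hk, Nat.div_eq_of_lt (by omega)]
  omega

lemma pred_mod (k a : ℕ) (hk : 0 < k) (ha : 0 < a) : (k * a - 1) % k = k - 1 := by
  obtain ⟨a', rfl⟩ : ∃ a', a = a' + 1 := ⟨a - 1, by omega⟩
  have h : k * (a' + 1) - 1 = k * a' + (k - 1) := by rw [Nat.mul_succ]; omega
  rw [h, Nat.mul_add_mod, Nat.mod_eq_of_lt (by omega)]

lemma step {b : ℕ → ℤ} {C : ℤ} {D r : ℕ} (hC : 0 < C) (hb : ∀ i, 1 ≤ b i)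
    (hK : ∀ j, j < r → C * ∏ i ∈ Finset.range j, b i ^ (D - 1) ≤ b j)
    (n : ℕ) (hn : n + 1 < D ^ r) : C * T b D r n ≤ T b D r (n + 1) := by
  have hD2 : 2 ≤ D := by
    rcases Nat.lt_or_ge D 2 with h | h
    · exfalso
      have h1 : D ^ r ≤ 1 ^ r := Nat.pow_le_pow_left (by omega) r
      rw [one_pow] at h1
      omega
    · exact h
  classical
  set P : ℕ → Prop := fun j => D ^ j ∣ n + 1 with hPdef
  set j := Nat.findGreatest P r with hjdef
  have hdvd : D ^ j ∣ n + 1 := by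
    rcases Nat.eq_zero_or_pos j with hj0 | hj0
    · rw [hj0]; simp
    · exact Nat.findGreatest_of_ne_zero (P := P) (n := r) hjdef.symm (by omega)
  have hjr : j < r := by
    have hle : D ^ j ≤ n + 1 := Nat.le_of_dvd (by omega) hdvd
    have h2 : D ^ j < D ^ r := lt_of_le_of_lt hle hn
    exact (Nat.pow_lt_pow_iff_right hD2).mp h2
  have hndvd : ¬ D ^ (j + 1) ∣ n + 1 :=
    Nat.findGreatest_is_greatest (P := P) (n := r) (k := j + 1) (by omega) (by omega)
  obtain ⟨mq, hmq⟩ := hdvd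
  have hmq1 : 1 ≤ mq := by
    rcases Nat.eq_zero_or_pos mq with rfl | h
    · simp at hmq
    · exact h
  have hDmq : ¬ D ∣ mq := by
    rintro ⟨t, rfl⟩
    exact hndvd ⟨t, by rw [hmq, pow_succ]; ring⟩
  -- digit facts
  have hdigsucc_lt : ∀ i, i < j → dig D (n + 1) i = 0 := by
    intro i hi
    have h1 : n + 1 = D ^ i * (D ^ (j - i) * mq) := by
      rw [hmq, ← mul_assoc, ← pow_add]
      congr 2
      omega
    unfold dig
    rw [h1, Nat.mul_div_cancel_left _ (Nat.pow_pos (by omega))]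
    have hd : D ∣ D ^ (j - i) * mq := Dvd.dvd.mul_right (dvd_pow_self D (by omega)) mq
    omega
  have hdig_lt : ∀ i, i < j → dig D n i = D - 1 := by
    intro i hi
    have h1 : n = D ^ i * (D ^ (j - i) * mq) - 1 := by
      rw [← mul_assoc, ← pow_add, show i + (j - i) = j by omega]
      omega
    have hX : 0 < D ^ (j - i) * mq := by positivity
    unfold dig
    rw [h1, pred_div _ _ (Nat.pow_pos (by omega)) hX]
    have hpow : D * D ^ (j - i - 1) = D ^ (j - i) := by
      rw [← pow_succ']
      congr 1
      omega
    have h2 : D ^ (j - i) * mq - 1 = D * (D ^ (j - i - 1) * mq) - 1 := by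
      rw [← mul_assoc, hpow]
    rw [h2, pred_mod D _ (by omega) (by positivity)]
  have hnj : n / D ^ j = mq - 1 := by
    rw [show n = D ^ j * mq - 1 by omega, pred_div _ _ (Nat.pow_pos (by omega)) hmq1]
  have hn1j : (n + 1) / D ^ j = mq := by
    rw [hmq, Nat.mul_div_cancel_left _ (Nat.pow_pos (by omega))]
  have hdig_eq : dig D (n + 1) j = dig D n j + 1 := by
    unfold dig
    rw [hnj, hn1j]
    have hdm := Nat.div_add_mod mq D
    have hsD : mq % D < D := Nat.mod_lt _ (by omega)
    have hs0 : mq % D ≠ 0 := fun h => hDmq (Nat.dvd_of_mod_eq_zero h)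
    have h1 : mq - 1 = D * (mq / D) + (mq % D - 1) := by omega
    rw [h1, Nat.mul_add_mod]
    rw [Nat.mod_eq_of_lt (show mq % D - 1 < D by omega)]
    omega
  have hdig_gt : ∀ i, j < i → dig D (n + 1) i = dig D n i := by
    intro i hi
    have hnd : ¬ D ^ i ∣ n + 1 := fun h =>
      hndvd (dvd_trans (pow_dvd_pow D (by omega)) h)
    unfold dig
    rw [Nat.succ_div_of_not_dvd hnd]
  -- product identity
  have key : T b D r (n + 1) * ∏ i ∈ Finset.range j, b i ^ (D - 1)
      = T b D r n * b j := by
    unfold T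
    have hsplit : ∀ g : ℕ → ℤ, ∏ i ∈ Finset.range r, g i
        = (∏ i ∈ Finset.range (j + 1), g i) * ∏ i ∈ Finset.Ico (j + 1) r, g i :=
      fun g => (Finset.prod_range_mul_prod_Ico g (by omega)).symm
    rw [hsplit, hsplit]
    have hIco : ∏ i ∈ Finset.Ico (j + 1) r, b i ^ dig D (n + 1) i
        = ∏ i ∈ Finset.Ico (j + 1) r, b i ^ dig D n i :=
      Finset.prod_congr rfl (fun i hi => by
        have h := (Finset.mem_Ico.mp hi).1
        rw [hdig_gt i (by omega)])
    have h1 : ∏ i ∈ Finset.range (j + 1), b i ^ dig D (n + 1) i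
        = b j ^ (dig D n j + 1) := by
      rw [Finset.prod_range_succ, hdig_eq]
      have hone : ∏ i ∈ Finset.range j, b i ^ dig D (n + 1) i = 1 :=
        Finset.prod_eq_one (fun i hi => by
          rw [hdigsucc_lt i (Finset.mem_range.mp hi), pow_zero])
      rw [hone, one_mul]
    have h2 : ∏ i ∈ Finset.range (j + 1), b i ^ dig D n i
        = (∏ i ∈ Finset.range j, b i ^ (D - 1)) * b j ^ dig D n j := by
      rw [Finset.prod_range_succ]
      congr 1
      exact Finset.prod_congr rfl (fun i hi => by
        rw [hdig_lt i (Finset.mem_range.mp hi)])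
    rw [h1, h2, hIco]
    ring
  have hTpos : (0:ℤ) < T b D r (n + 1) := lt_of_lt_of_le one_pos (one_le_T hb D r (n + 1))
  have hineq : C * T b D r n * b j ≤ T b D r (n + 1) * b j := by
    calc C * T b D r n * b j
        = (C * ∏ i ∈ Finset.range j, b i ^ (D - 1)) * T b D r (n + 1) := by
          rw [mul_assoc, ← key]; ring
      _ ≤ b j * T b D r (n + 1) :=
          mul_le_mul_of_nonneg_right (hK j hjr) (le_of_lt hTpos)
      _ = T b D r (n + 1) * b j := mul_comm _ _
  exact le_of_mul_le_mul_right hineq (lt_of_lt_of_le one_pos (hb j))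

lemma sum_T {b : ℕ → ℤ} {C : ℤ} {D r : ℕ} (hC : 0 < C) (hb : ∀ i, 1 ≤ b i)
    (hK : ∀ j, j < r → C * ∏ i ∈ Finset.range j, b i ^ (D - 1) ≤ b j) :
    ∀ n, n < D ^ r → (C - 1) * ∑ i ∈ Finset.range n, T b D r i ≤ T b D r n - 1 := by
  intro n
  induction n with
  | zero => intro _; simp [T, dig]
  | succ n ih =>
    intro hn
    rw [Finset.sum_range_succ, mul_add]
    have h1 := ih (by omega)
    have h2 := step hC hb hK n hn
    have h3 : (C - 1) * T b D r n = C * T b D r n - T b D r n := by ring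
    linarith

lemma code_split (D s : ℕ) (g : ℕ → ℕ) (hs : 0 < s) :
    ∑ i ∈ Finset.range s, g i * D ^ i
      = g 0 + D * ∑ i ∈ Finset.range (s - 1), g (i + 1) * D ^ i := by
  obtain ⟨s', rfl⟩ : ∃ s', s = s' + 1 := ⟨s - 1, by omega⟩
  rw [Finset.sum_range_succ']
  have h : ∀ i ∈ Finset.range s', g (i + 1) * D ^ (i + 1) = D * (g (i + 1) * D ^ i) :=
    fun i _ => by rw [pow_succ]; ring
  rw [Finset.sum_congr rfl h, ← Finset.mul_sum, pow_zero, Nat.mul_one,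
    Nat.add_sub_cancel, Nat.add_comm]

lemma dig_code (D : ℕ) : ∀ (k s : ℕ) (g : ℕ → ℕ), (∀ i, i < s → g i < D) → k < s →
    dig D (∑ i ∈ Finset.range s, g i * D ^ i) k = g k := by
  intro k
  induction k with
  | zero =>
    intro s g hg hk
    have hD : 0 < D := by have := hg 0 hk; omega
    unfold dig
    rw [pow_zero, Nat.div_one, code_split D s g (by omega), Nat.add_mul_mod_self_left,
      Nat.mod_eq_of_lt (hg 0 hk)]
  | succ k ih =>
    intro s g hg hk
    have hD : 0 < D := by have := hg 0 (by omega); omega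
    unfold dig
    rw [pow_succ', ← Nat.div_div_eq_div_mul]
    have hdiv : (∑ i ∈ Finset.range s, g i * D ^ i) / D
        = ∑ i ∈ Finset.range (s - 1), g (i + 1) * D ^ i := by
      rw [code_split D s g (by omega), Nat.add_mul_div_left _ _ hD,
        Nat.div_eq_of_lt (hg 0 (by omega)), Nat.zero_add]
    rw [hdiv]
    have := ih (s - 1) (fun i => g (i + 1)) (fun i hi => hg (i + 1) (by omega)) (by omega)
    simpa [dig] using this

lemma code_lt (D : ℕ) (hD : 0 < D) (g : ℕ → ℕ) :
    ∀ s, (∀ i, i < s → g i < D) → ∑ i ∈ Finset.range s, g i * D ^ i < D ^ s := by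
  intro s
  induction s with
  | zero => intro _; simp
  | succ s ih =>
    intro hg
    rw [Finset.sum_range_succ, pow_succ]
    have h1 := ih (fun i hi => hg i (by omega))
    have h2 : g s * D ^ s + D ^ s ≤ D ^ s * D := by
      calc g s * D ^ s + D ^ s = D ^ s * (g s + 1) := by ring
        _ ≤ D ^ s * D := Nat.mul_le_mul_left _ (hg s (by omega))
    omega

lemma eval_ne_zero {r : ℕ} {C : ℤ} {D : ℕ} (hC : 0 < C)
    (b : ℕ → ℤ) (hb : ∀ i, 1 ≤ b i)
    (hK : ∀ j, j < r → C * ∏ i ∈ Finset.range j, b i ^ (D - 1) ≤ b j)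
    (p : MvPolynomial (Fin r) ℤ) (hp : p ≠ 0)
    (hdeg : p.totalDegree < D)
    (hcoeff : ∀ mon, |p.coeff mon| < C) :
    eval (fun k : Fin r => b k.1) p ≠ 0 := by
  classical
  have hD : 0 < D := by omega
  have hbd : ∀ d ∈ p.support, ∀ i : Fin r, d i < D := by
    intro d hd i
    have h1 : p.degreeOf i ≤ p.totalDegree := degreeOf_le_totalDegree p i
    exact (degreeOf_lt_iff hD).mp (lt_of_le_of_lt h1 hdeg) d hd
  set dval : (Fin r →₀ ℕ) → ℕ → ℕ := fun d i => if h : i < r then d ⟨i, h⟩ else 0 with hdval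
  set code : (Fin r →₀ ℕ) → ℕ := fun d => ∑ i ∈ Finset.range r, dval d i * D ^ i with hcode
  have hdvallt : ∀ d ∈ p.support, ∀ i, i < r → dval d i < D := by
    intro d hd i hi
    simp only [hdval, dif_pos hi]
    exact hbd d hd ⟨i, hi⟩
  have hdig : ∀ d ∈ p.support, ∀ i, i < r → dig D (code d) i = dval d i := by
    intro d hd i hi
    exact dig_code D i r (dval d) (hdvallt d hd) hi
  have hcodelt : ∀ d ∈ p.support, code d < D ^ r :=
    fun d hd => code_lt D hD (dval d) r (hdvallt d hd)
  have hval : ∀ d ∈ p.support, (∏ i : Fin r, b i.1 ^ d i) = T b D r (code d) := by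
    intro d hd
    unfold T
    rw [← Fin.prod_univ_eq_prod_range (fun i => b i ^ dig D (code d) i) r]
    apply Finset.prod_congr rfl
    intro i _
    rw [hdig d hd i.1 i.2]
    simp only [hdval, dif_pos i.2]
  have hsupp : p.support.Nonempty := by
    rwa [Finset.nonempty_iff_ne_empty, Ne, MvPolynomial.support_eq_empty]
  have himg : (p.support.image code).Nonempty := hsupp.image code
  set N := (p.support.image code).max' himg with hN
  obtain ⟨d0, hd0s, hd0⟩ := Finset.mem_image.mp ((p.support.image code).max'_mem himg)
  have hinj : ∀ d ∈ p.support, ∀ e ∈ p.support, code d = code e → d = e := by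
    intro d hd e he hde
    ext i
    have h1 := hdig d hd i.1 i.2
    have h2 := hdig e he i.1 i.2
    rw [hde, h2] at h1
    simpa only [hdval, dif_pos i.2] using h1.symm
  intro hE
  have heval : eval (fun k : Fin r => b k.1) p
      = ∑ d ∈ p.support, p.coeff d * T b D r (code d) := by
    rw [eval_eq']
    exact Finset.sum_congr rfl (fun d hd => by rw [hval d hd])
  rw [heval, ← Finset.add_sum_erase _ _ hd0s] at hE
  set R := ∑ d ∈ p.support.erase d0, p.coeff d * T b D r (code d) with hR
  have hTnn : ∀ n : ℕ, (0:ℤ) ≤ T b D r n := fun n => le_trans zero_le_one (one_le_T hb D r n)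
  have habs : |R| ≤ (C - 1) * ∑ k ∈ Finset.range N, T b D r k := by
    calc |R| ≤ ∑ d ∈ p.support.erase d0, |p.coeff d * T b D r (code d)| :=
          Finset.abs_sum_le_sum_abs _ _
      _ ≤ ∑ d ∈ p.support.erase d0, (C - 1) * T b D r (code d) := by
          apply Finset.sum_le_sum
          intro d hd
          rw [abs_mul, abs_of_nonneg (hTnn _)]
          apply mul_le_mul_of_nonneg_right _ (hTnn _)
          have := hcoeff d
          omega
      _ = (C - 1) * ∑ d ∈ p.support.erase d0, T b D r (code d) :=
          (Finset.mul_sum _ _ _).symm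
      _ ≤ (C - 1) * ∑ k ∈ Finset.range N, T b D r k := by
          apply mul_le_mul_of_nonneg_left _ (by omega)
          have himage : ∑ d ∈ p.support.erase d0, T b D r (code d)
              = ∑ k ∈ (p.support.erase d0).image code, T b D r k := by
            rw [Finset.sum_image]
            intro x hx y hy hxy
            exact hinj x (Finset.mem_of_mem_erase hx) y (Finset.mem_of_mem_erase hy) hxy
          rw [himage]
          apply Finset.sum_le_sum_of_subset_of_nonneg
          · intro k hk
            obtain ⟨d, hd, rfl⟩ := Finset.mem_image.mp hk
            have hds : d ∈ p.support := Finset.mem_of_mem_erase hd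
            have hne : d ≠ d0 := Finset.ne_of_mem_erase hd
            have hle : code d ≤ N := Finset.le_max' _ _ (Finset.mem_image_of_mem code hds)
            have hneq : code d ≠ N := fun h => hne (hinj d hds d0 hd0s (h.trans hd0.symm))
            exact Finset.mem_range.mpr (by omega)
          · intro k _ _
            exact hTnn k
  have hcd0 : 1 ≤ |p.coeff d0| := by
    have h := MvPolynomial.mem_support_iff.mp hd0s
    rcases lt_trichotomy (p.coeff d0) 0 with h' | h' | h' <;> simp [abs] <;> omega
  have hTN : T b D r N ≤ |p.coeff d0| * T b D r N :=
    le_mul_of_one_le_left (hTnn N) hcd0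
  have hST := sum_T hC hb hK N (by rw [hN, ← hd0]; exact hcodelt d0 hd0s)
  have hR0 : |p.coeff d0| * T b D r N = |R| := by
    have h1 : p.coeff d0 * T b D r (code d0) = -R := by linarith
    rw [← abs_neg R, ← h1, abs_mul, hd0, abs_of_nonneg (hTnn N)]
  linarith

lemma exists_algebraicIndependent (r : ℕ) : ∃ α : Fin r → ℂ, AlgebraicIndependent ℚ α := by
  obtain ⟨s, hs⟩ := exists_isTranscendenceBasis ℚ ℂ
  have hcard : (Cardinal.mk ℂ) = Cardinal.mk s :=
    IsAlgClosed.cardinal_eq_cardinal_transcendence_basis_of_aleph0_lt' _ hs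
      Cardinal.mk_le_aleph0 (by rw [Cardinal.mk_complex]; exact Cardinal.aleph0_lt_continuum)
  have hinf : Infinite s := by
    rw [Cardinal.infinite_iff, ← hcard, Cardinal.mk_complex]
    exact Cardinal.aleph0_le_continuum
  let f : Fin r ↪ s := Fin.valEmbedding.trans (Infinite.natEmbedding s)
  exact ⟨Subtype.val ∘ f, hs.1.comp f f.injective⟩

end Koiran5


open Koiran5 in
/-- Lemma 4 (Koiran 1997): a quantifier-free formula (a Boolean combination,
encoded by `φ`, of polynomial equations `p i = 0`) that holds at every
algebraically independent tuple also holds at any sufficiently fast growing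
integer sequence. -/
theorem stmt5 (r m : ℕ) (p : Fin m → MvPolynomial (Fin r) ℤ)
    (φ : (Fin m → Prop) → Prop)
    (C : ℤ) (D : ℕ) (hC : 0 < C) (hD : 1 ≤ D)
    (hdeg : ∀ i, (p i).totalDegree < D)
    (hcoeff : ∀ i mon, |(p i).coeff mon| < C)
    (hφ : ∀ α : Fin r → ℂ, AlgebraicIndependent ℚ α →
      φ (fun i => aeval α (p i) = 0))
    (β : Fin r → ℤ)
    (hβ1 : ∀ h : 0 < r, C ≤ β ⟨0, h⟩)
    (hβ : ∀ j : ℕ, (hj : j + 1 < r) →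
      C * (D : ℤ) ^ (j + 1) * (β ⟨j, by omega⟩) ^ D ≤ β ⟨j + 1, hj⟩) :
    φ (fun i => aeval (fun k => ((β k : ℤ) : ℂ)) (p i) = 0) := by
  classical
  set b : ℕ → ℤ := fun i => if h : i < r then β ⟨i, h⟩ else 1 with hbdef
  have hbeta : ∀ i (h : i < r), b i = β ⟨i, h⟩ := fun i h => by
    simp only [hbdef, dif_pos h]
  have hb : ∀ i, 1 ≤ b i := by
    intro i
    induction i with
    | zero =>
      by_cases h : 0 < r
      · rw [hbeta 0 h]
        exact le_trans hC (hβ1 h)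
      · simp [hbdef, h]
    | succ i ih =>
      by_cases h : i + 1 < r
      · have hi : i < r := by omega
        have h1 : C * (D:ℤ) ^ (i+1) * (β ⟨i, hi⟩) ^ D ≤ β ⟨i+1, h⟩ := hβ i h
        rw [hbeta (i+1) h]
        have hbi : (1:ℤ) ≤ β ⟨i, hi⟩ := by rw [← hbeta i hi]; exact ih
        have hpow : (1:ℤ) ≤ β ⟨i, hi⟩ ^ D := one_le_pow₀ hbi
        have hDp : (1:ℤ) ≤ (D:ℤ) ^ (i+1) := one_le_pow₀ (by exact_mod_cast hD)
        have hC1 : (1:ℤ) ≤ C := hC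
        have hcd : (1:ℤ) ≤ C * (D:ℤ) ^ (i+1) := by
          simpa using mul_le_mul hC1 hDp zero_le_one (le_trans zero_le_one hC1)
        have hfull : (1:ℤ) ≤ C * (D:ℤ) ^ (i+1) * β ⟨i, hi⟩ ^ D := by
          simpa using mul_le_mul hcd hpow zero_le_one (le_trans zero_le_one hcd)
        linarith
      · simp [hbdef, h]
  have hbnn : ∀ i, (0:ℤ) ≤ b i := fun i => le_trans zero_le_one (hb i)
  have hG : ∀ j, j < r → ∏ i ∈ Finset.range (j+1), b i ^ (D - 1) ≤ b j ^ D := by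
    intro j
    induction j with
    | zero =>
      intro h
      rw [Finset.prod_range_one]
      exact pow_le_pow_right₀ (hb 0) (by omega)
    | succ j ih =>
      intro h
      have hj : j < r := by omega
      rw [Finset.prod_range_succ]
      have h1 := ih hj
      have h2 : b j ^ D ≤ b (j+1) := by
        rw [hbeta j hj, hbeta (j+1) h]
        have h3 : C * (D:ℤ) ^ (j+1) * (β ⟨j, hj⟩) ^ D ≤ β ⟨j+1, h⟩ := hβ j h
        have hDp : (1:ℤ) ≤ (D:ℤ) ^ (j+1) := one_le_pow₀ (by exact_mod_cast hD)
        have hpow : (0:ℤ) ≤ β ⟨j, hj⟩ ^ D :=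
          pow_nonneg (le_trans zero_le_one (by rw [← hbeta j hj]; exact hb j)) D
        have hC1 : (1:ℤ) ≤ C := hC
        have hcd : (1:ℤ) ≤ C * (D:ℤ) ^ (j+1) := by
          simpa using mul_le_mul hC1 hDp zero_le_one (le_trans zero_le_one hC1)
        have h4 : 1 * β ⟨j, hj⟩ ^ D ≤ (C * (D:ℤ) ^ (j+1)) * β ⟨j, hj⟩ ^ D :=
          mul_le_mul_of_nonneg_right hcd hpow
        rw [one_mul] at h4
        linarith
      have e1 : b (j+1) * b (j+1) ^ (D-1) = b (j+1) ^ D := by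
        rw [← pow_succ']
        congr 1
        omega
      calc (∏ i ∈ Finset.range (j+1), b i ^ (D-1)) * b (j+1) ^ (D-1)
          ≤ b j ^ D * b (j+1) ^ (D-1) :=
            mul_le_mul_of_nonneg_right h1 (pow_nonneg (hbnn _) _)
        _ ≤ b (j+1) * b (j+1) ^ (D-1) :=
            mul_le_mul_of_nonneg_right h2 (pow_nonneg (hbnn _) _)
        _ = b (j+1) ^ D := e1
  have hK : ∀ j, j < r → C * ∏ i ∈ Finset.range j, b i ^ (D - 1) ≤ b j := by
    intro j hj
    cases j with
    | zero =>
      rw [Finset.range_zero, Finset.prod_empty, mul_one, hbeta 0 hj]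
      exact hβ1 hj
    | succ j =>
      have hjr : j < r := by omega
      have h1 := hG j hjr
      have h2 : C * (D:ℤ) ^ (j+1) * (β ⟨j, hjr⟩) ^ D ≤ β ⟨j+1, hj⟩ := hβ j hj
      rw [hbeta (j+1) hj]
      have hDp : (1:ℤ) ≤ (D:ℤ) ^ (j+1) := one_le_pow₀ (by exact_mod_cast hD)
      have h3 : C * ∏ i ∈ Finset.range (j+1), b i ^ (D-1) ≤ C * b j ^ D :=
        mul_le_mul_of_nonneg_left h1 (le_of_lt hC)
      rw [hbeta j hjr] at h3
      have hpow : (0:ℤ) ≤ β ⟨j, hjr⟩ ^ D :=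
        pow_nonneg (le_trans zero_le_one (by rw [← hbeta j hjr]; exact hb j)) D
      have h5 : C ≤ C * (D:ℤ) ^ (j+1) := le_mul_of_one_le_right (le_of_lt hC) hDp
      have h4 : C * β ⟨j, hjr⟩ ^ D ≤ (C * (D:ℤ) ^ (j+1)) * β ⟨j, hjr⟩ ^ D :=
        mul_le_mul_of_nonneg_right h5 hpow
      linarith
  obtain ⟨α, hα⟩ := exists_algebraicIndependent r
  have hmap : ∀ q : MvPolynomial (Fin r) ℤ,
      aeval (R := ℚ) α (MvPolynomial.map (algebraMap ℤ ℚ) q) = aeval (R := ℤ) α q := by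
    intro q
    rw [aeval_def, aeval_def, eval₂_map]
    congr 1
  have hα2 : ∀ i, aeval α (p i) = 0 ↔ p i = 0 := by
    intro i
    constructor
    · intro h
      have hinj := algebraicIndependent_iff_injective_aeval.mp hα
      have h2 : MvPolynomial.map (algebraMap ℤ ℚ) (p i) = 0 := by
        apply hinj
        rw [map_zero, hmap]
        exact h
      exact MvPolynomial.map_injective (algebraMap ℤ ℚ)
        (fun a b hab => by exact_mod_cast hab) (by rw [h2, map_zero])
    · intro h
      rw [h, map_zero]
  have hcast : ∀ i, aeval (fun k => ((β k : ℤ) : ℂ)) (p i)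
      = ((eval (fun k : Fin r => b k.1) (p i) : ℤ) : ℂ) := by
    intro i
    have hfun : (fun k : Fin r => b k.1) = (fun k : Fin r => β k) := by
      funext k
      rw [hbeta k.1 k.2]
    rw [hfun, aeval_def]
    have h0 : eval (fun k : Fin r => β k) (p i)
        = eval₂ (RingHom.id ℤ) (fun k : Fin r => β k) (p i) := rfl
    have h1 := eval₂_comp_left (Int.castRingHom ℂ) (RingHom.id ℤ) (fun k : Fin r => β k) (p i)
    rw [h0, show ((eval₂ (RingHom.id ℤ) (fun k : Fin r => β k) (p i) : ℤ) : ℂ)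
      = (Int.castRingHom ℂ) (eval₂ (RingHom.id ℤ) (fun k : Fin r => β k) (p i)) from rfl, h1]
    congr 1
  have hβ2 : ∀ i, aeval (fun k => ((β k : ℤ) : ℂ)) (p i) = 0 ↔ p i = 0 := by
    intro i
    rw [hcast i]
    constructor
    · intro h
      by_contra hne
      have hnz := eval_ne_zero hC b hb hK (p i) hne (hdeg i) (hcoeff i)
      exact hnz (by exact_mod_cast h)
    · intro h
      rw [h, map_zero, Int.cast_zero]
  have hfinal : (fun i => aeval (fun k => ((β k : ℤ) : ℂ)) (p i) = 0)
      = (fun i => aeval α (p i) = 0) := by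
    funext i
    exact propext ((hβ2 i).trans (hα2 i).symm)
  rw [hfinal]
  exact hφ α hα
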